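/- arXiv:1912.06743 — 2 statements merged into one kernel-verified Lean document; each statement's English description precedes it below -/
import Mathlib

section
/- With κ = κ^L_1 the alternating bilinear map on V = ℂ^{2n} defined by κ(x_i,x_j) = a_1(x_i−x_j)+b_1(y_i−y_j) for i ≠ j (and the remaining values as in the doubled-permutation definition), for any three distinct indices i, j, k the cyclic sum κ(x_i, κ(x_j,x_k)) + κ(x_j, κ(x_k,x_i)) + κ(x_k, κ(x_i,x_j)) equals 0, and likewise the cyclic sum with y's in place of x's equals 0. -/
noncomputable section

/-- The doubled permutation representation space `V = ℂ^n ⊕ ℂ^n`. -/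
abbrev DV (n : ℕ) := (Fin n → ℂ) × (Fin n → ℂ)

/-- The action of `σ ∈ Sₙ` on `V = ℂ^n ⊕ ℂ^n`, permuting coordinates in both summands. -/
def act {n : ℕ} (σ : Equiv.Perm (Fin n)) : DV n →ₗ[ℂ] DV n where
  toFun p := (p.1 ∘ σ.symm, p.2 ∘ σ.symm)
  map_add' p q := by ext m <;> simp
  map_smul' c p := by ext m <;> simp

/-- The basis vector `xᵢ`. -/
def xv {n : ℕ} (i : Fin n) : DV n := (Pi.single i 1, 0)

/-- The basis vector `yᵢ`. -/
def yv {n : ℕ} (i : Fin n) : DV n := (0, Pi.single i 1)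

/-- For `κ = κ^L₁` the alternating bilinear map on `V = ℂ^{2n}` from the
doubled-permutation definition, for any three distinct indices `i, j, k` the cyclic sums
`κ(xᵢ, κ(xⱼ,xₖ)) + κ(xⱼ, κ(xₖ,xᵢ)) + κ(xₖ, κ(xᵢ,xⱼ))` and the analogous sum with `y`'s
both vanish. -/
theorem kappaL1_cyclic_sum_xxx_yyy (n : ℕ) (hn : 4 ≤ n)
    (a1 a2 a3 a4 a5 a6 a7 b1 b2 b3 b4 b5 b6 b7 : ℂ)
    (κ : DV n →ₗ[ℂ] DV n →ₗ[ℂ] DV n)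
    (halt : ∀ v : DV n, κ v v = 0)
    (hxx : ∀ i j : Fin n, i ≠ j →
      κ (xv i) (xv j) = a1 • (xv i - xv j) + b1 • (yv i - yv j))
    (hyy : ∀ i j : Fin n, i ≠ j →
      κ (yv i) (yv j) = a2 • (xv i - xv j) + b2 • (yv i - yv j))
    (hxyd : ∀ i : Fin n,
      κ (xv i) (yv i) = a3 • xv i + a4 • (∑ m, xv m) + b3 • yv i + b4 • (∑ m, yv m))
    (hxyo : ∀ i j : Fin n, i ≠ j →
      κ (xv i) (yv j) = a5 • xv i + a6 • xv j + a7 • (∑ m, xv m)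
        + b5 • yv i + b6 • yv j + b7 • (∑ m, yv m)) :
    ∀ i j k : Fin n, i ≠ j → j ≠ k → i ≠ k →
      (κ (xv i) (κ (xv j) (xv k)) + κ (xv j) (κ (xv k) (xv i))
          + κ (xv k) (κ (xv i) (xv j)) = 0) ∧
      (κ (yv i) (κ (yv j) (yv k)) + κ (yv j) (κ (yv k) (yv i))
          + κ (yv k) (κ (yv i) (yv j)) = 0) := by

  have hskew : ∀ u v : DV n, κ u v = - κ v u := by
    intro u v
    have h := halt (u + v)
    simp only [map_add, LinearMap.add_apply, halt, zero_add, add_zero] at h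
    exact eq_neg_of_add_eq_zero_right h
  intro i j k hij hjk hik
  have hji := hij.symm
  have hkj := hjk.symm
  have hki := hik.symm
  have hyx : ∀ p q : Fin n, p ≠ q → κ (yv p) (xv q)
      = -(a5 • xv q + a6 • xv p + a7 • (∑ m, xv m)
        + b5 • yv q + b6 • yv p + b7 • (∑ m, yv m)) := by
    intro p q h
    rw [hskew, hxyo q p h.symm]
  constructor
  · rw [hxx j k hjk, hxx k i hki, hxx i j hij]
    simp only [map_add, map_smul, map_sub]
    rw [hxx i j hij, hxx i k hik, hxx j k hjk, hxx j i hji, hxx k i hki, hxx k j hkj,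
      hxyo i j hij, hxyo i k hik, hxyo j k hjk, hxyo j i hji, hxyo k i hki, hxyo k j hkj]
    module
  · rw [hyy j k hjk, hyy k i hki, hyy i j hij]
    simp only [map_add, map_smul, map_sub]
    rw [hyy i j hij, hyy i k hik, hyy j k hjk, hyy j i hji, hyy k i hki, hyy k j hkj,
      hyx i j hij, hyx i k hik, hyx j k hjk, hyx j i hji, hyx k i hki, hyx k j hkj]
    module
end
end

section
/- Let κ^C_1 be the alternating bilinear form on V = ℂ^{2n} with κ^C_1(x_i,x_j) = κ^C_1(y_i,y_j) = 0, κ^C_1(x_i,y_i) = α, κ^C_1(x_i,y_j) = β for i ≠ j, and let κ^L_1 be as in the doubled-permutation definition with parameters a_1,…,a_7,b_1,…,b_7. Then for any three distinct indices i, j, k, the cyclic sum κ^C_1(x_i, κ^L_1(x_j,y_k)) + κ^C_1(x_j, κ^L_1(y_k,x_i)) + κ^C_1(y_k, κ^L_1(x_i,x_j)) equals 0. -/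
noncomputable section

/-- With `κ^C₁` and `κ^L₁` as in the doubled-permutation definitions, for any three
distinct indices `i, j, k` the cyclic sum
`κ^C₁(xᵢ, κ^L₁(xⱼ,yₖ)) + κ^C₁(xⱼ, κ^L₁(yₖ,xᵢ)) + κ^C₁(yₖ, κ^L₁(xᵢ,xⱼ))` vanishes. -/
theorem kappaC1_kappaL1_cyclic_sum_xxy (n : ℕ) (hn : 4 ≤ n)
    (a1 a2 a3 a4 a5 a6 a7 b1 b2 b3 b4 b5 b6 b7 α β : ℂ)
    (κL : DV n →ₗ[ℂ] DV n →ₗ[ℂ] DV n)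
    (haltL : ∀ v : DV n, κL v v = 0)
    (hxx : ∀ i j : Fin n, i ≠ j →
      κL (xv i) (xv j) = a1 • (xv i - xv j) + b1 • (yv i - yv j))
    (hyy : ∀ i j : Fin n, i ≠ j →
      κL (yv i) (yv j) = a2 • (xv i - xv j) + b2 • (yv i - yv j))
    (hxyd : ∀ i : Fin n,
      κL (xv i) (yv i) = a3 • xv i + a4 • (∑ m, xv m) + b3 • yv i + b4 • (∑ m, yv m))
    (hxyo : ∀ i j : Fin n, i ≠ j →
      κL (xv i) (yv j) = a5 • xv i + a6 • xv j + a7 • (∑ m, xv m)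
        + b5 • yv i + b6 • yv j + b7 • (∑ m, yv m))
    (κC : DV n →ₗ[ℂ] DV n →ₗ[ℂ] ℂ)
    (haltC : ∀ v : DV n, κC v v = 0)
    (hcxx : ∀ i j : Fin n, κC (xv i) (xv j) = 0)
    (hcyy : ∀ i j : Fin n, κC (yv i) (yv j) = 0)
    (hcxyd : ∀ i : Fin n, κC (xv i) (yv i) = α)
    (hcxyo : ∀ i j : Fin n, i ≠ j → κC (xv i) (yv j) = β) :
    ∀ i j k : Fin n, i ≠ j → j ≠ k → i ≠ k →
      κC (xv i) (κL (xv j) (yv k)) + κC (xv j) (κL (yv k) (xv i))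
        + κC (yv k) (κL (xv i) (xv j)) = 0 := by
  intro i j k hij hjk hik
  have hantiL : ∀ u v : DV n, κL v u = -(κL u v) := by
    intro u v
    have h := haltL (u + v)
    simp only [map_add, LinearMap.add_apply, haltL, zero_add, add_zero] at h
    exact eq_neg_of_add_eq_zero_left h
  have hantiC : ∀ u v : DV n, κC v u = -(κC u v) := by
    intro u v
    have h := haltC (u + v)
    simp only [map_add, LinearMap.add_apply, haltC, zero_add, add_zero] at h
    exact eq_neg_of_add_eq_zero_left h
  have hsum : ∀ p : Fin n, ∑ m, κC (xv p) (yv m) = α + ((n : ℂ) - 1) * β := by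
    intro p
    have h1 : ∀ m : Fin n, κC (xv p) (yv m) = β + (if p = m then α - β else 0) := by
      intro m
      by_cases h : p = m
      · subst h; simp [hcxyd]
      · simp [h, hcxyo p m h]
    calc ∑ m, κC (xv p) (yv m) = ∑ m : Fin n, (β + (if p = m then α - β else 0)) :=
          Finset.sum_congr rfl (fun m _ => h1 m)
      _ = (n : ℂ) * β + (α - β) := by
          rw [Finset.sum_add_distrib, Finset.sum_const, Finset.sum_ite_eq]
          simp [mul_comm]
      _ = α + ((n : ℂ) - 1) * β := by ring
  have hsumx : ∀ p : Fin n, κC (xv p) (∑ m, xv m) = 0 := by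
    intro p; rw [map_sum]; simp [hcxx]
  have e2 : κC (xv i) (yv k) = β := hcxyo i k hik
  have e4 : κC (xv j) (yv k) = β := hcxyo j k hjk
  have f1 : κC (yv k) (xv i) = -β := by rw [hantiC, e2]
  have f2 : κC (yv k) (xv j) = -β := by rw [hantiC, e4]
  rw [hantiL (xv i) (yv k), hxyo j k hjk, hxx i j hij, hxyo i k hik]
  simp only [map_neg, map_add, map_sub, map_smul, map_sum, smul_eq_mul,
    LinearMap.map_smulₛₗ, RingHom.id_apply]
  simp only [hcxx, hcyy, hcxyo i j hij, e2, e4, hcxyo j i hij.symm, f1, f2, hsum,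
    Finset.sum_const_zero]
  ring
end
end
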